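/- For d ≥ 2 and n ≥ 1, let P_n = {(i_1/n, …, i_{d−1}/n, i_d/n²) : 0 ≤ i_j ≤ n−1 for 1 ≤ j ≤ d−1, 1 ≤ i_d ≤ n²} and let H = {(t_1,…,t_{d−1}, t_1² + ⋯ + t_{d−1}²) : t ∈ ℝ^{d−1}} be the standard paraboloid. Then |P_n| = n^{d+1}, and for every p ∈ P_n, the translated paraboloid H + p contains at least n^{d−1} points of the grid {(i_1/n, …, i_{d−1}/n, k/n²) : 0 ≤ i_j ≤ n−1, k ∈ ℤ}. Consequently, the total number of incidences between P_n and the family {H + p : p ∈ P_n} of N = n^{d+1} translated paraboloids and N points is at least N^{2 − 2/(d+1)}, up to constants. -/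

import Mathlib

open Set
set_option synthInstance.maxHeartbeats 1000000
set_option maxHeartbeats 1000000
set_option linter.unusedVariables false
set_option linter.deprecated false

/-- Valtr's point set `P_n` in `ℝ^d` with `d = e + 1`. -/
def valtrP (e n : ℕ) : Set (Fin (e+1) → ℝ) :=
  {x | ∃ i : Fin (e+1) → ℤ,
    (∀ j : Fin e, 0 ≤ i j.castSucc ∧ i j.castSucc ≤ (n:ℤ) - 1 ∧
      x j.castSucc = (i j.castSucc : ℝ) / n) ∧
    1 ≤ i (Fin.last e) ∧ i (Fin.last e) ≤ (n:ℤ)^2 ∧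
    x (Fin.last e) = (i (Fin.last e) : ℝ) / (n:ℝ)^2}

/-- The grid `{(i_1/n, …, i_{d−1}/n, k/n²) : 0 ≤ i_j ≤ n−1, k ∈ ℤ}`. -/
def valtrGrid (e n : ℕ) : Set (Fin (e+1) → ℝ) :=
  {x | ∃ i : Fin (e+1) → ℤ,
    (∀ j : Fin e, 0 ≤ i j.castSucc ∧ i j.castSucc ≤ (n:ℤ) - 1 ∧
      x j.castSucc = (i j.castSucc : ℝ) / n) ∧
    x (Fin.last e) = (i (Fin.last e) : ℝ) / (n:ℝ)^2}

/-- The standard paraboloid `H = {(t, |t|²) : t ∈ ℝ^{d−1}}`. -/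
def parab (e : ℕ) : Set (Fin (e+1) → ℝ) :=
  {x | x (Fin.last e) = ∑ j : Fin e, (x j.castSucc)^2}

noncomputable def pt (e n : ℕ) (a : Fin e → ℤ) (b : ℤ) : Fin (e+1) → ℝ :=
  Fin.lastCases ((b:ℝ)/(n:ℝ)^2) (fun j => (a j : ℝ)/(n:ℝ))

@[simp] lemma pt_castSucc (e n : ℕ) (a : Fin e → ℤ) (b : ℤ) (j : Fin e) :
    pt e n a b j.castSucc = (a j : ℝ)/(n:ℝ) := by simp [pt]

@[simp] lemma pt_last (e n : ℕ) (a : Fin e → ℤ) (b : ℤ) :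
    pt e n a b (Fin.last e) = (b:ℝ)/(n:ℝ)^2 := by simp [pt]

lemma mem_valtrP_iff (e n : ℕ) (x : Fin (e+1) → ℝ) :
    x ∈ valtrP e n ↔ ∃ (a : Fin e → ℤ) (b : ℤ),
      (∀ j, 0 ≤ a j ∧ a j ≤ (n:ℤ) - 1) ∧ 1 ≤ b ∧ b ≤ (n:ℤ)^2 ∧ x = pt e n a b := by
  constructor
  · rintro ⟨i, hi, h1, h2, h3⟩
    refine ⟨fun j => i j.castSucc, i (Fin.last e), fun j => ⟨(hi j).1, (hi j).2.1⟩, h1, h2, ?_⟩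
    funext k
    induction k using Fin.lastCases with
    | last => simpa using h3
    | cast j => simpa using (hi j).2.2
  · rintro ⟨a, b, ha, h1, h2, rfl⟩
    exact ⟨Fin.lastCases b a, fun j => ⟨by simpa using (ha j).1, by simpa using (ha j).2,
      by simp⟩, by simpa using h1, by simpa using h2, by simp⟩

lemma mem_valtrGrid_iff (e n : ℕ) (x : Fin (e+1) → ℝ) :
    x ∈ valtrGrid e n ↔ ∃ (a : Fin e → ℤ) (b : ℤ),
      (∀ j, 0 ≤ a j ∧ a j ≤ (n:ℤ) - 1) ∧ x = pt e n a b := by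
  constructor
  · rintro ⟨i, hi, h3⟩
    refine ⟨fun j => i j.castSucc, i (Fin.last e), fun j => ⟨(hi j).1, (hi j).2.1⟩, ?_⟩
    funext k
    induction k using Fin.lastCases with
    | last => simpa using h3
    | cast j => simpa using (hi j).2.2
  · rintro ⟨a, b, ha, rfl⟩
    exact ⟨Fin.lastCases b a, fun j => ⟨by simpa using (ha j).1, by simpa using (ha j).2,
      by simp⟩, by simp⟩

lemma mem_image_parab (e : ℕ) (p q : Fin (e+1) → ℝ) :
    q ∈ (fun x => x + p) '' parab e ↔
      q (Fin.last e) - p (Fin.last e) = ∑ j : Fin e, (q j.castSucc - p j.castSucc)^2 := by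
  constructor
  · rintro ⟨t, ht, rfl⟩
    simpa [parab, Pi.add_apply] using ht
  · intro h
    exact ⟨q - p, by simpa [parab] using h, by simp⟩

lemma incid_iff (e n : ℕ) (hn : 1 ≤ n) (a a' : Fin e → ℤ) (b b' : ℤ) :
    pt e n a b ∈ (fun x => x + pt e n a' b') '' parab e ↔
      b = b' + ∑ j, (a j - a' j)^2 := by
  have hn' : (n:ℝ) ≠ 0 := by positivity
  rw [mem_image_parab]
  simp only [pt_last, pt_castSucc]
  have hs : ∑ j : Fin e, ((a j:ℝ)/(n:ℝ) - (a' j:ℝ)/(n:ℝ))^2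
      = ((∑ j, (a j - a' j)^2 : ℤ) : ℝ)/(n:ℝ)^2 := by
    push_cast
    rw [Finset.sum_div]
    refine Finset.sum_congr rfl fun j _ => ?_
    rw [div_sub_div_same, div_pow]
  rw [hs, div_sub_div_same, div_eq_div_iff (by positivity) (by positivity)]
  constructor
  · intro h
    have h2 := mul_right_cancel₀ (pow_ne_zero 2 hn') h
    have h3 : ((b - b' : ℤ):ℝ) = ((∑ j, (a j - a' j)^2 : ℤ):ℝ) := by push_cast at h2 ⊢; linarith
    have h4 : b - b' = ∑ j, (a j - a' j)^2 := by exact_mod_cast h3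
    omega
  · intro h
    subst h
    push_cast
    ring

noncomputable def PF (e n : ℕ) : Finset (Fin (e+1) → ℝ) :=
  Finset.image (fun ab : (Fin e → Fin n) × Fin (n^2) =>
    pt e n (fun j => (ab.1 j : ℤ)) ((ab.2 : ℤ)+1)) Finset.univ

lemma pt_inj (e n : ℕ) (hn : 1 ≤ n) {a a' : Fin e → ℤ} {b b' : ℤ}
    (h : pt e n a b = pt e n a' b') : a = a' ∧ b = b' := by
  have hn' : (n:ℝ) ≠ 0 := by positivity
  constructor
  · funext j
    have := congrFun h j.castSucc
    simp only [pt_castSucc] at this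
    field_simp at this; exact_mod_cast this
  · have := congrFun h (Fin.last e)
    simp only [pt_last] at this
    have h2 : ((n:ℝ)^2) ≠ 0 := by positivity
    field_simp at this; exact_mod_cast this

lemma coe_PF (e n : ℕ) (hn : 1 ≤ n) : (PF e n : Set (Fin (e+1) → ℝ)) = valtrP e n := by
  ext x
  simp only [PF, Finset.coe_image, Finset.coe_univ, Set.image_univ, Set.mem_range,
    mem_valtrP_iff]
  constructor
  · rintro ⟨ab, rfl⟩
    refine ⟨_, _, fun j => ⟨by positivity, ?_⟩, by omega, ?_, rfl⟩
    · have := (ab.1 j).isLt; omega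
    · have := ab.2.isLt
      have h2 : ((ab.2 : ℕ) : ℤ) < (n:ℤ)^2 := by exact_mod_cast this
      omega
  · rintro ⟨a, b, ha, h1, h2, rfl⟩
    refine ⟨⟨fun j => ⟨(a j).toNat, ?_⟩, ⟨(b - 1).toNat, ?_⟩⟩, ?_⟩
    · have := ha j; omega
    · have : ((n:ℤ)^2) = ((n^2 : ℕ) : ℤ) := by push_cast; ring
      omega
    · refine congrArg₂ (pt e n) ?_ ?_
      · funext j
        have h0 := (ha j).1
        simp [Int.toNat_of_nonneg h0]
      · simp only [Fin.val_mk]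
        omega

lemma card_PF (e n : ℕ) (hn : 1 ≤ n) : (PF e n).card = n ^ (e+2) := by
  rw [PF, Finset.card_image_of_injective _ ?_, Finset.card_univ]
  · simp [pow_succ, pow_add]; ring
  · intro ab ab' h
    obtain ⟨h1, h2⟩ := pt_inj e n hn h
    ext j
    · exact_mod_cast congrFun h1 j
    · omega

lemma valtrP_finite (e n : ℕ) (hn : 1 ≤ n) : (valtrP e n).Finite := by
  rw [← coe_PF e n hn]; exact (PF e n).finite_toSet

lemma ncard_valtrP (e n : ℕ) (hn : 1 ≤ n) : (valtrP e n).ncard = n ^ (e+2) := by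
  rw [← coe_PF e n hn, Set.ncard_coe_finset, card_PF e n hn]

lemma part2 (e n : ℕ) (hn : 1 ≤ n) (a' : Fin e → ℤ) (b' : ℤ)
    (ha' : ∀ j, 0 ≤ a' j ∧ a' j ≤ (n:ℤ)-1) :
    (n:ℕ) ^ e ≤ (valtrGrid e n ∩ (fun x => x + pt e n a' b') '' parab e).ncard := by
  have hset : valtrGrid e n ∩ (fun x => x + pt e n a' b') '' parab e
      = ↑(Finset.image (fun v : Fin e → Fin n =>
          pt e n (fun j => (v j : ℤ)) (b' + ∑ j, ((v j : ℤ) - a' j)^2)) Finset.univ) := by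
    ext x
    simp only [Set.mem_inter_iff, Finset.coe_image, Finset.coe_univ, Set.image_univ,
      Set.mem_range, mem_valtrGrid_iff]
    constructor
    · rintro ⟨⟨a, b, ha, rfl⟩, hx⟩
      rw [incid_iff e n hn] at hx
      refine ⟨fun j => ⟨(a j).toNat, by have := ha j; omega⟩, ?_⟩
      refine congrArg₂ (pt e n) ?_ ?_
      · funext j
        have h0 := (ha j).1
        simp [Int.toNat_of_nonneg h0]
      · rw [hx]
        congr 1
        refine Finset.sum_congr rfl fun j _ => ?_
        have h0 := (ha j).1
        simp [Int.toNat_of_nonneg h0]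
    · rintro ⟨v, rfl⟩
      constructor
      · refine ⟨_, _, fun j => ⟨by positivity, ?_⟩, rfl⟩
        have := (v j).isLt; omega
      · rw [incid_iff e n hn]
  rw [hset, Set.ncard_coe_finset]
  rw [Finset.card_image_of_injective _ ?_, Finset.card_univ]
  · simp
  · intro v v' h
    obtain ⟨h1, _⟩ := pt_inj e n hn h
    funext j
    have := congrFun h1 j
    exact Fin.ext (by exact_mod_cast this)

lemma part3 (e n : ℕ) (he : 1 ≤ e) (hn : 1 ≤ n) :
    (n/(2*e)+1)^e * ((n/(2*e)+1)^e * (n^2 - e*(n/(2*e))^2)) ≤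
      (((valtrP e n) ×ˢ (valtrP e n)) ∩
        {qp | qp.1 ∈ (fun x => x + qp.2) '' parab e}).ncard := by
  set q := n/(2*e) with hqdef
  set M := q + 1 with hMdef
  set K := n^2 - e*q^2 with hKdef
  have h2eq : 2*e*q ≤ n := by
    have := Nat.div_mul_le_self n (2*e)
    calc 2*e*q = q * (2*e) := by ring
    _ ≤ n := this
  have h4eq : (2*e*q)*(2*e*q) ≤ n*n := Nat.mul_le_mul h2eq h2eq
  have heq : e*q^2 ≤ n^2 := by nlinarith [h4eq]
  have hq1 : q ≤ n - 1 := by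
    have h2 : n/(2*e) ≤ n/2 := Nat.div_le_div_left (by omega) (by omega)
    omega
  have hKn : K ≤ n^2 := by omega
  -- the injection
  set h : (Fin e → Fin M) × (Fin e → Fin M) × Fin K → (Fin (e+1) → ℝ) × (Fin (e+1) → ℝ) :=
    fun w => (pt e n (fun j => (w.1 j : ℤ))
        ((w.2.2:ℤ) + 1 + ∑ j, ((w.1 j : ℤ) - (w.2.1 j : ℤ))^2),
      pt e n (fun j => (w.2.1 j : ℤ)) ((w.2.2:ℤ) + 1)) with hhdef
  have hsub : ↑(Finset.image h Finset.univ) ⊆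
      ((valtrP e n) ×ˢ (valtrP e n)) ∩ {qp | qp.1 ∈ (fun x => x + qp.2) '' parab e} := by
    intro z hz
    simp only [Finset.coe_image, Finset.coe_univ, Set.image_univ, Set.mem_range] at hz
    obtain ⟨w, rfl⟩ := hz
    have hc : (w.2.2 : ℕ) < K := w.2.2.isLt
    have hs1 : 0 ≤ ∑ j, ((w.1 j : ℤ) - (w.2.1 j : ℤ))^2 :=
      Finset.sum_nonneg fun j _ => sq_nonneg _
    have hs2 : ∑ j, ((w.1 j : ℤ) - (w.2.1 j : ℤ))^2 ≤ (e:ℤ) * (q:ℤ)^2 := by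
      calc ∑ j, ((w.1 j : ℤ) - (w.2.1 j : ℤ))^2
          ≤ ∑ _j : Fin e, (q:ℤ)^2 := by
            refine Finset.sum_le_sum fun j _ => ?_
            have h1 : (w.1 j : ℕ) < M := (w.1 j).isLt
            have h2 : (w.2.1 j : ℕ) < M := (w.2.1 j).isLt
            have h1' : ((w.1 j : ℕ):ℤ) ≤ (q:ℤ) := by exact_mod_cast Nat.lt_succ_iff.mp h1
            have h2' : ((w.2.1 j : ℕ):ℤ) ≤ (q:ℤ) := by exact_mod_cast Nat.lt_succ_iff.mp h2
            have h3 : (0:ℤ) ≤ (w.1 j : ℕ) := Int.natCast_nonneg _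
            have h4 : (0:ℤ) ≤ (w.2.1 j : ℕ) := Int.natCast_nonneg _
            nlinarith
        _ = (e:ℤ) * (q:ℤ)^2 := by simp [mul_comm]
    have hKZ : (K:ℤ) = (n:ℤ)^2 - (e:ℤ)*(q:ℤ)^2 := by
      rw [hKdef]; push_cast [heq]; ring
    have hcoord : ∀ (v : Fin e → Fin M) (j : Fin e),
        0 ≤ ((v j : ℕ):ℤ) ∧ ((v j : ℕ):ℤ) ≤ (n:ℤ) - 1 := by
      intro v j
      have h1 : (v j : ℕ) < M := (v j).isLt
      constructor
      · exact Int.natCast_nonneg _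
      · have : (v j : ℕ) ≤ n - 1 := by omega
        omega
    have hcK : ((w.2.2:ℕ):ℤ) < (K:ℤ) := by exact_mod_cast hc
    refine ⟨⟨?_, ?_⟩, ?_⟩
    · rw [hhdef]
      rw [mem_valtrP_iff]
      refine ⟨_, _, hcoord w.1, by linarith [hs1, hcK], ?_, rfl⟩
      have h5 : ((w.2.2:ℕ):ℤ) + 1 ≤ (K:ℤ) := by omega
      linarith [hs2, hKZ]
    · rw [hhdef]
      rw [mem_valtrP_iff]
      refine ⟨_, _, hcoord w.2.1, by omega, by omega, rfl⟩
    · rw [hhdef]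
      simp only [Set.mem_setOf_eq]
      rw [incid_iff e n hn]
  have hfin : (((valtrP e n) ×ˢ (valtrP e n)) ∩
      {qp | qp.1 ∈ (fun x => x + qp.2) '' parab e}).Finite :=
    Set.Finite.inter_of_left ((valtrP_finite e n hn).prod (valtrP_finite e n hn)) _
  have hcard : (Finset.image h Finset.univ).card = M^e * (M^e * K) := by
    rw [Finset.card_image_of_injective _ ?_, Finset.card_univ]
    · simp
    · intro w w' hw
      rw [hhdef] at hw
      simp only [Prod.mk.injEq] at hw
      obtain ⟨hA, hB⟩ := hw
      obtain ⟨hB1, hB2⟩ := pt_inj e n hn hB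
      obtain ⟨hA1, _⟩ := pt_inj e n hn hA
      have e1 : w.1 = w'.1 := by
        funext j
        exact Fin.ext (by exact_mod_cast congrFun hA1 j)
      have e2 : w.2.1 = w'.2.1 := by
        funext j
        exact Fin.ext (by exact_mod_cast congrFun hB1 j)
      have e3 : w.2.2 = w'.2.2 := Fin.ext (by omega)
      exact Prod.ext e1 (Prod.ext e2 e3)
  calc M^e * (M^e * K) = (Finset.image h Finset.univ).card := hcard.symm
    _ = (↑(Finset.image h Finset.univ) : Set _).ncard := (Set.ncard_coe_finset _).symm
    _ ≤ _ := Set.ncard_le_ncard hsub hfin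


theorem stmt6 (e : ℕ) (he : 1 ≤ e) :
    (∀ n : ℕ, 1 ≤ n →
      (valtrP e n).ncard = n ^ (e+2) ∧
      ∀ p ∈ valtrP e n,
        n ^ e ≤ (valtrGrid e n ∩ (fun x => x + p) '' parab e).ncard) ∧
    (∃ c : ℝ, 0 < c ∧ ∀ n : ℕ, 1 ≤ n →
      c * ((n:ℝ) ^ (e+2)) ^ (2 - 2 / ((e:ℝ) + 2)) ≤
        (((valtrP e n) ×ˢ (valtrP e n)) ∩
          {qp | qp.1 ∈ (fun x => x + qp.2) '' parab e}).ncard) := by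
  have heR : (1:ℝ) ≤ (e:ℝ) := by exact_mod_cast he
  have h2e : (0:ℝ) < 2*(e:ℝ) := by linarith
  constructor
  · intro n hn
    refine ⟨ncard_valtrP e n hn, ?_⟩
    intro p hp
    rw [mem_valtrP_iff] at hp
    obtain ⟨a', b', ha', _, _, rfl⟩ := hp
    exact part2 e n hn a' b' ha'
  · refine ⟨(1/(2*(e:ℝ)))^(2*e) * (1/2), ?_, ?_⟩
    · exact mul_pos (pow_pos (by positivity) _) one_half_pos
    · intro n hn
      have hnR : (0:ℝ) < (n:ℝ) := by exact_mod_cast hn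
      -- rewrite the rpow expression
      have key : ((n:ℝ) ^ (e+2)) ^ (2 - 2 / ((e:ℝ) + 2)) = (n:ℝ) ^ (2*e+2) := by
        have he2 : ((e:ℝ)+2) ≠ 0 := by positivity
        rw [← Real.rpow_natCast (n:ℝ) (e+2), ← Real.rpow_natCast (n:ℝ) (2*e+2),
          ← Real.rpow_mul hnR.le]
        congr 1
        push_cast
        field_simp
        ring
      rw [key]
      set q := n/(2*e) with hqdef
      set M := q + 1 with hMdef
      set K := n^2 - e*q^2 with hKdef
      have h2eq : 2*e*q ≤ n := by
        have := Nat.div_mul_le_self n (2*e)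
        calc 2*e*q = q * (2*e) := by ring
        _ ≤ n := this
      have h4eq : (2*e*q)*(2*e*q) ≤ n*n := Nat.mul_le_mul h2eq h2eq
      have heq : e*q^2 ≤ n^2 := by nlinarith [h4eq]
      have h3 := part3 e n he hn
      have hcast : ((M^e * (M^e * K) : ℕ) : ℝ) ≤
          ((((valtrP e n) ×ˢ (valtrP e n)) ∩
            {qp | qp.1 ∈ (fun x => x + qp.2) '' parab e}).ncard : ℝ) := by
        exact_mod_cast h3
      refine le_trans ?_ hcast
      push_cast
      -- real facts
      have h2eqR : 2*(e:ℝ)*(q:ℝ) ≤ (n:ℝ) := by exact_mod_cast h2eq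
      have hnatM : n < M * (2*e) := by
        rw [hMdef]
        exact (Nat.div_lt_iff_lt_mul (by omega)).mp (Nat.lt_succ_self q)
      have hMR : (n:ℝ) ≤ 2*(e:ℝ)*(M:ℝ) := by
        have : (n:ℝ) < (M:ℝ) * (2*(e:ℝ)) := by exact_mod_cast hnatM
        linarith
      have hdiv : (n:ℝ)/(2*(e:ℝ)) ≤ (M:ℝ) := by
        rw [div_le_iff₀ h2e]
        linarith
      have hpow : ((n:ℝ)/(2*(e:ℝ)))^(2*e) ≤ (M:ℝ)^(2*e) :=
        pow_le_pow_left₀ (by positivity) hdiv _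
      have hKR : (n:ℝ)^2/2 ≤ (K:ℝ) := by
        have hK' : (K:ℝ) = (n:ℝ)^2 - (e:ℝ)*(q:ℝ)^2 := by
          rw [hKdef, Nat.cast_sub heq]
          push_cast
          ring
        rw [hK']
        have hq0 : (0:ℝ) ≤ (q:ℝ) := Nat.cast_nonneg _
        nlinarith [mul_le_mul h2eqR h2eqR (by positivity) hnR.le, sq_nonneg (q:ℝ), heR]
      have hid : (1/(2*(e:ℝ)))^(2*e) * (1/2) * (n:ℝ)^(2*e+2)
          = ((n:ℝ)/(2*(e:ℝ)))^(2*e) * ((n:ℝ)^2/2) := by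
        rw [div_pow, div_pow, one_pow]
        ring
      have htwo : (M:ℝ)^(2*e) = (M:ℝ)^e * (M:ℝ)^e := by
        rw [two_mul, pow_add]
      calc (1/(2*(e:ℝ)))^(2*e) * (1/2) * (n:ℝ)^(2*e+2)
          = ((n:ℝ)/(2*(e:ℝ)))^(2*e) * ((n:ℝ)^2/2) := hid
        _ ≤ (M:ℝ)^(2*e) * (K:ℝ) := by
            refine mul_le_mul hpow hKR (by positivity) (by positivity)
        _ = ((q:ℝ)+1)^e * (((q:ℝ)+1)^e * (K:ℝ)) := by rw [htwo, hMdef]; push_cast; ring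
        _ = _ := by simp [hMdef]
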